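/- In the NFA A(G) constructed from a simple graph G on n vertices (four layers as described), every accepting path for a word a^r has the form: i steps within layer 1 ending at q_i^1, a transition to some q_j^2, a transition to some q_k^3, a transition to some q_l^4, then n-1-l steps within layer 4 ending at q_{n-1}^4; hence r = i + 3 + (n-1-l), and r = n+2 if and only if i = l. -/
import Mathlib


/-- The one-step transition relation of an NFA: `R p q` iff some letter takes `p` to `q`. -/
def NFA.rel {α σ : Type*} (A : NFA α σ) (p q : σ) : Prop := ∃ a, q ∈ A.step p a

/-- There is a walk of exactly `m` steps of the relation `R` from `s` to `t`. -/
def RelPath {σ : Type*} (R : σ → σ → Prop) (m : ℕ) (s t : σ) : Prop :=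
  ∃ p : ℕ → σ, p 0 = s ∧ p m = t ∧ ∀ i < m, R (p i) (p (i + 1))

/-- An NFA is acyclic if its transition diagram contains no nonempty cycle. -/
def NFA.Acyclic {α σ : Type*} (A : NFA α σ) : Prop :=
  ¬ ∃ (q : σ) (m : ℕ), 0 < m ∧ RelPath A.rel m q q

/-- The four-layer unary NFA built from a simple graph `G` on `Fin n` for the triangle
reduction.  States are `(i, j)` with `i : Fin n` a vertex and `j : Fin 4` a layer
(layers 1–4 of the paper are `0,1,2,3` here).  Layer 0 and layer 3 are chains
`(i,·) → (i+1,·)`, and `(i, j) → (k, j+1)` is a transition iff `G.Adj i k`.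
The start state is `(0, 0)` and the unique accept state is `(n-1, 3)`. -/
def triangleNFA (n : ℕ) [NeZero n] (G : SimpleGraph (Fin n)) :
    NFA Unit (Fin n × Fin 4) where
  step p _ :=
    {q | ((p.2 = 0 ∨ p.2 = 3) ∧ q.2 = p.2 ∧ (q.1 : ℕ) = (p.1 : ℕ) + 1) ∨
         ((q.2 : ℕ) = (p.2 : ℕ) + 1 ∧ G.Adj p.1 q.1)}
  start := {(0, 0)}
  accept := {q | (q.1 : ℕ) = n - 1 ∧ q.2 = 3}

/-- Every accepting path for a^r in the four-layer NFA has the form: i steps in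
layer 1 ending at (i,0), a transition to some (j,1), then to some (k,2), then to
some (l,3), then n-1-l steps in layer 4; hence r = i + 3 + (n - 1 - l), and
r = n + 2 iff i = l. -/
theorem triangleNFA_accepting_path_shape {n : ℕ} [NeZero n] (G : SimpleGraph (Fin n))
    (r : ℕ) (p : ℕ → Fin n × Fin 4)
    (hstart : p 0 ∈ (triangleNFA n G).start)
    (haccept : p r ∈ (triangleNFA n G).accept)
    (hstep : ∀ t < r, (triangleNFA n G).rel (p t) (p (t + 1))) :
    ∃ i j k l : Fin n,
      p (i : ℕ) = (i, 0) ∧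
      p ((i : ℕ) + 1) = (j, 1) ∧
      p ((i : ℕ) + 2) = (k, 2) ∧
      p ((i : ℕ) + 3) = (l, 3) ∧
      r = (i : ℕ) + 3 + (n - 1 - (l : ℕ)) ∧
      (r = n + 2 ↔ (i : ℕ) = (l : ℕ)) := by
  classical
  have hstep' : ∀ t < r,
      (((p t).2 = 0 ∨ (p t).2 = 3) ∧ (p (t+1)).2 = (p t).2 ∧
        ((p (t+1)).1 : ℕ) = ((p t).1 : ℕ) + 1) ∨
      (((p (t+1)).2 : ℕ) = ((p t).2 : ℕ) + 1 ∧ G.Adj (p t).1 (p (t+1)).1) := by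
    intro t ht
    obtain ⟨a, ha⟩ := hstep t ht
    simpa [triangleNFA, NFA.rel] using ha
  have hp0 : p 0 = (0, 0) := by simpa [triangleNFA] using hstart
  have hacc : ((p r).1 : ℕ) = n - 1 ∧ (p r).2 = 3 := by
    simpa [triangleNFA] using haccept
  -- while in layer 0, the vertex equals the time
  have hlayer0 : ∀ t, t ≤ r → (p t).2 = 0 → ((p t).1 : ℕ) = t := by
    intro t
    induction t with
    | zero => intro _ _; simp [hp0]
    | succ t ih =>
      intro ht h0
      rcases hstep' t (by omega) with ⟨_, h2, h3⟩ | ⟨h2, _⟩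
      · rw [h3, ih (by omega) (h2 ▸ h0)]
      · rw [h0] at h2; simp at h2
  -- the first time the layer is nonzero
  have hex : ∃ t, (p t).2 ≠ 0 := ⟨r, by rw [hacc.2]; decide⟩
  obtain ⟨m, hm1, hmin, hmr⟩ : ∃ m, (p m).2 ≠ 0 ∧ (∀ t < m, (p t).2 = 0) ∧ m ≤ r := by
    refine ⟨Nat.find hex, Nat.find_spec hex, fun t ht => ?_, Nat.find_le (by rw [hacc.2]; decide)⟩
    by_contra h
    exact absurd (Nat.find_le h) (Nat.not_le.mpr ht)
  have hmpos : 0 < m := by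
    rcases Nat.eq_zero_or_pos m with h | h
    · exact absurd (h ▸ hm1) (by simp [hp0])
    · exact h
  obtain ⟨i0, rfl⟩ : ∃ i0, m = i0 + 1 := ⟨m - 1, by omega⟩
  have hi0 : (p i0).2 = 0 := hmin i0 (by omega)
  -- step i0 → i0+1 must be a layer increment
  have h1 : ((p (i0 + 1)).2 : ℕ) = 1 := by
    rcases hstep' i0 (by omega) with ⟨_, h2, _⟩ | ⟨h2, _⟩
    · exact absurd (h2.trans hi0) hm1
    · rw [h2, hi0]; rfl
  have hr1 : i0 + 1 < r := by
    rcases Nat.lt_or_ge (i0 + 1) r with h | h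
    · exact h
    · have : i0 + 1 = r := by omega
      rw [this, hacc.2] at h1; exact absurd h1 (by decide)
  have h2 : ((p (i0 + 2)).2 : ℕ) = 2 := by
    rcases hstep' (i0 + 1) hr1 with ⟨h0 | h0, _, _⟩ | ⟨h2, _⟩
    · rw [h0] at h1; exact absurd h1 (by decide)
    · rw [h0] at h1; exact absurd h1 (by decide)
    · rw [show i0 + 1 + 1 = i0 + 2 by ring] at h2; rw [h2, h1]
  have hr2 : i0 + 2 < r := by
    rcases Nat.lt_or_ge (i0 + 2) r with h | h
    · exact h
    · have : i0 + 2 = r := by omega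
      rw [this, hacc.2] at h2; exact absurd h2 (by decide)
  have h3 : ((p (i0 + 3)).2 : ℕ) = 3 := by
    rcases hstep' (i0 + 2) hr2 with ⟨h0 | h0, _, _⟩ | ⟨hx, _⟩
    · rw [h0] at h2; exact absurd h2 (by decide)
    · rw [h0] at h2; exact absurd h2 (by decide)
    · rw [show i0 + 2 + 1 = i0 + 3 by ring] at hx; rw [hx, h2]
  -- once in layer 3, stay in layer 3 and increment vertex
  have chain : ∀ s, i0 + 3 ≤ s → s ≤ r →
      ((p s).2 : ℕ) = 3 ∧ ((p s).1 : ℕ) = ((p (i0 + 3)).1 : ℕ) + (s - (i0 + 3)) := by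
    intro s
    induction s with
    | zero => omega
    | succ s ih =>
      intro hs1 hs2
      rcases Nat.lt_or_ge s (i0 + 3) with h | h
      · have : s + 1 = i0 + 3 := by omega
        rw [this]; exact ⟨h3, by omega⟩
      · obtain ⟨hl, hv⟩ := ih h (by omega)
        rcases hstep' s (by omega) with ⟨_, hl2, hv2⟩ | ⟨hl2, _⟩
        · constructor
          · rw [hl2, hl]
          · rw [hv2, hv]; omega
        · rw [hl] at hl2
          have := (p (s + 1)).2.isLt
          omega
  obtain ⟨_, hvr⟩ := chain r (by omega) le_rfl
  have hl3 : (p (i0 + 3)).2 = 3 := Fin.ext (by rw [h3]; rfl)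
  have hl1 : (p (i0 + 1)).2 = 1 := Fin.ext (by rw [h1]; rfl)
  have hl2 : (p (i0 + 2)).2 = 2 := Fin.ext (by rw [h2]; rfl)
  have hiv : ((p i0).1 : ℕ) = i0 := hlayer0 i0 (by omega) hi0
  refine ⟨(p i0).1, (p (i0 + 1)).1, (p (i0 + 2)).1, (p (i0 + 3)).1, ?_, ?_, ?_, ?_, ?_, ?_⟩
  · rw [hiv]; exact Prod.ext rfl hi0
  · rw [hiv]; exact Prod.ext rfl hl1
  · rw [hiv]; exact Prod.ext rfl hl2
  · rw [hiv]; exact Prod.ext rfl hl3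
  · have hln : ((p (i0 + 3)).1 : ℕ) < n := (p (i0 + 3)).1.isLt
    have := hacc.1
    omega
  · have hln : ((p (i0 + 3)).1 : ℕ) < n := (p (i0 + 3)).1.isLt
    have hin : ((p i0).1 : ℕ) < n := (p i0).1.isLt
    have := hacc.1
    have hn : 0 < n := Nat.pos_of_ne_zero (NeZero.ne n)
    omega
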